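/- The Fourier multiplier m(t,k,η) = exp(2 arctan(ν^{1/3}(t − η/k))) satisfies, for all t ≥ 0 and nonzero integer k and real η: (i) e^{−π} ≤ m(t,k,η) ≤ e^{π}; (ii) ∂ₜm/m = 2ν^{1/3}/(ν^{2/3}(t − η/k)² + 1); (iii) ν·p(t,k,η) + (∂ₜm/m)(t,k,η) ≥ ν^{1/3}, where p(t,k,η) = k² + (η − kt)². -/

import Mathlib

/-- The multiplier `m(t) = exp(2 arctan(ν^{1/3}(t − η/k)))` satisfies:
(i) `e^{−π} ≤ m ≤ e^{π}`; (ii) `∂ₜm = (2ν^{1/3}/(ν^{2/3}(t−η/k)²+1))·m`;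
(iii) `νp + ∂ₜm/m ≥ ν^{1/3}`. -/
theorem stmt_9 (ν : ℝ) (hν : 0 < ν) (hν1 : ν ≤ 1) (k : ℤ) (hk : k ≠ 0)
    (η t : ℝ) (ht : 0 ≤ t) :
    Real.exp (-Real.pi) ≤ Real.exp (2 * Real.arctan (ν ^ ((1 : ℝ) / 3) * (t - η / k))) ∧
    Real.exp (2 * Real.arctan (ν ^ ((1 : ℝ) / 3) * (t - η / k))) ≤ Real.exp Real.pi ∧
    HasDerivAt (fun s : ℝ => Real.exp (2 * Real.arctan (ν ^ ((1 : ℝ) / 3) * (s - η / k))))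
      ((2 * ν ^ ((1 : ℝ) / 3) / (ν ^ ((2 : ℝ) / 3) * (t - η / k) ^ 2 + 1)) *
        Real.exp (2 * Real.arctan (ν ^ ((1 : ℝ) / 3) * (t - η / k)))) t ∧
    ν * ((k : ℝ) ^ 2 + (η - k * t) ^ 2) +
        2 * ν ^ ((1 : ℝ) / 3) / (ν ^ ((2 : ℝ) / 3) * (t - η / k) ^ 2 + 1) ≥
      ν ^ ((1 : ℝ) / 3) := by
  set a := ν ^ ((1 : ℝ) / 3) with ha
  have ha0 : 0 < a := Real.rpow_pos_of_pos hν _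
  have ha2 : ν ^ ((2 : ℝ) / 3) = a ^ 2 := by
    rw [ha, ← Real.rpow_natCast (ν ^ ((1 : ℝ) / 3)) 2, ← Real.rpow_mul hν.le]
    norm_num
  have haν : a * ν ^ ((2 : ℝ) / 3) = ν := by
    rw [ha, ← Real.rpow_add hν]; norm_num
  set x := t - η / k with hx
  clear_value a x
  refine ⟨?_, ?_, ?_, ?_⟩
  · apply Real.exp_le_exp.mpr
    have := Real.neg_pi_div_two_lt_arctan (a * x)
    linarith
  · apply Real.exp_le_exp.mpr
    have := Real.arctan_lt_pi_div_two (a * x)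
    linarith
  · have h1 : HasDerivAt (fun s : ℝ => a * (s - η / k)) a t := by
      simpa using ((hasDerivAt_id t).sub_const (η / k)).const_mul a
    have h2 := (Real.hasDerivAt_arctan (a * (t - η / k))).comp t h1
    rw [← hx] at h2
    have h3 := (h2.const_mul 2).exp
    convert h3 using 1
    simp only [Function.comp_def]
    rw [ha2, mul_pow, show (Real.arctan ∘ fun s : ℝ => a * (s - η / k)) t = Real.arctan (a * x) by rw [hx]; rfl]
    have hd : (0:ℝ) < a ^ 2 * x ^ 2 + 1 := by positivity
    set E := Real.exp (2 * Real.arctan (a * x)) with hE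
    field_simp
    ring
  · have hdenpos : (0:ℝ) < ν ^ ((2 : ℝ) / 3) * x ^ 2 + 1 := by positivity
    rcases le_or_gt (ν ^ ((2 : ℝ) / 3) * x ^ 2) 1 with h | h
    · have hle : a ≤ 2 * a / (ν ^ ((2 : ℝ) / 3) * x ^ 2 + 1) := by
        rw [le_div_iff₀ hdenpos]; nlinarith
      have hp : 0 ≤ ν * ((k : ℝ) ^ 2 + (η - k * t) ^ 2) := by positivity
      linarith
    · have hk1 : (1:ℝ) ≤ (k : ℝ) ^ 2 := by
        have h1 : (1:ℤ) ≤ k ^ 2 := by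
          have := Int.one_le_abs hk
          nlinarith [sq_abs k]
        exact_mod_cast h1
      have hk0 : (k : ℝ) ≠ 0 := Int.cast_ne_zero.mpr hk
      have hkx : (η - k * t) ^ 2 = (k : ℝ) ^ 2 * x ^ 2 := by
        rw [hx]; field_simp; ring
      have key : a ≤ ν * x ^ 2 := by
        have h2 := mul_le_mul_of_nonneg_left h.le ha0.le
        have h3 : a * (ν ^ ((2 : ℝ) / 3) * x ^ 2) = ν * x ^ 2 := by
          rw [← mul_assoc, haν]
        linarith
      have key2 : a ≤ ν * ((k : ℝ) ^ 2 * x ^ 2) := by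
        have h4 := mul_le_mul_of_nonneg_left hk1 (mul_nonneg hν.le (sq_nonneg x))
        nlinarith [key]
      have hterm : 0 ≤ 2 * a / (ν ^ ((2 : ℝ) / 3) * x ^ 2 + 1) := by positivity
      have hkpos : 0 ≤ ν * (k : ℝ) ^ 2 := by positivity
      rw [hkx]
      have expand : ν * ((k : ℝ) ^ 2 + (k : ℝ) ^ 2 * x ^ 2)
          = ν * (k : ℝ) ^ 2 + ν * ((k : ℝ) ^ 2 * x ^ 2) := by ring
      linarith [key2, hkpos, hterm]
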